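/- Let ν: ℂ[X] → ℂ be the unital linear functional whose free cumulants are κ_{2n−1}(ν) = 0 and κ_{2n}(ν) = m^{(1)}_n for all n ≥ 1, where m^{(1)}_n is the number of meanders on 2n bridges. Then ν(X^{2n−1}) = 0 and ν(X^{2n}) equals the number of pairs (π,ρ) ∈ NC(n)² such that the meandric system M_{π,ρ} is strictly non-crossing (i.e., the orbit partition of M_{π,ρ} is a non-crossing partition of {1,...,2n}). -/

import Mathlib

open scoped Classical

/-- A setoid (partition) of `Fin n` is non-crossing if there is no crossing
`a < b < c < d` with `a ∼ c`, `b ∼ d` but `a` and `b` in distinct blocks. -/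
def IsNC {n : ℕ} (S : Setoid (Fin n)) : Prop :=
  ∀ a b c d : Fin n, a < b → b < c → c < d → S.r a c → S.r b d → S.r a b

/-- A partition is a pairing if every block has exactly two elements. -/
def IsPairing {m : ℕ} (T : Setoid (Fin m)) : Prop :=
  ∀ x : Fin m, ∃ y : Fin m, y ≠ x ∧ T.r x y ∧ ∀ z : Fin m, T.r x z → z = x ∨ z = y

/-- The block of `i` in the partition `S`, as a finset. -/
noncomputable def blockOf {n : ℕ} (S : Setoid (Fin n)) (i : Fin n) : Finset (Fin n) :=
  Finset.univ.filter (fun j => S.r i j)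

lemma blockOf_nonempty {n : ℕ} (S : Setoid (Fin n)) (i : Fin n) :
    (blockOf S i).Nonempty :=
  ⟨i, by simp [blockOf, S.iseqv.refl i]⟩

/-- The permutation `P_S` which performs an increasing cycle on every block of `S`:
it sends `i` to the next larger element of its block, or to the minimum of the
block if `i` is the largest element of its block. -/
noncomputable def nextP {n : ℕ} (S : Setoid (Fin n)) (i : Fin n) : Fin n :=
  if h : ((blockOf S i).filter (fun j => i < j)).Nonempty
  then ((blockOf S i).filter (fun j => i < j)).min' h
  else (blockOf S i).min' (blockOf_nonempty S i)

/-- The inverse permutation `P_S⁻¹` (decreasing cycle on every block of `S`). -/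
noncomputable def prevP {n : ℕ} (S : Setoid (Fin n)) (i : Fin n) : Fin n :=
  if h : ((blockOf S i).filter (fun j => j < i)).Nonempty
  then ((blockOf S i).filter (fun j => j < i)).max' h
  else (blockOf S i).max' (blockOf_nonempty S i)

/-- `0`-indexed version of the point `2i-1` of `{1,…,2n}`. -/
def dEven {n : ℕ} (j : Fin n) : Fin (2*n) := ⟨2*j.val, by have := j.isLt; omega⟩

/-- `0`-indexed version of the point `2i` of `{1,…,2n}`. -/
def dOdd {n : ℕ} (j : Fin n) : Fin (2*n) := ⟨2*j.val+1, by have := j.isLt; omega⟩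

/-- The doubling construction `π ↦ A(π)`: the pairing of `{1,…,2n}` generated by
pairing each point `2i` with `2P_π(i) - 1`, so that the associated permutation
satisfies `P_{A(π)}(2i) = 2P_π(i) - 1` and `P_{A(π)}(2i-1) = 2P_π⁻¹(i)`. -/
noncomputable def archSetoid {n : ℕ} (S : Setoid (Fin n)) : Setoid (Fin (2*n)) :=
  Relation.EqvGen.setoid (fun a b => ∃ j : Fin n, a = dOdd j ∧ b = dEven (nextP S j))

/-- The meandric system permutation `M_{π,ρ} ∈ S_{2n}`, defined by
`M_{π,ρ}(2i-1) = 2P_π⁻¹(i)` and `M_{π,ρ}(2i) = 2P_ρ(i) - 1` (here `0`-indexed). -/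
noncomputable def meanderMap {n : ℕ} (π ρ : Setoid (Fin n)) (x : Fin (2*n)) : Fin (2*n) :=
  if x.val % 2 = 0
  then dOdd (prevP π ⟨x.val / 2, by have := x.isLt; omega⟩)
  else dEven (nextP ρ ⟨x.val / 2, by have := x.isLt; omega⟩)

/-- The orbit partition of a map. -/
def orbitSetoid {m : ℕ} (f : Fin m → Fin m) : Setoid (Fin m) :=
  Relation.EqvGen.setoid (fun a b => f a = b)

/-- Number of orbits of a map. -/
noncomputable def numOrbits {m : ℕ} (f : Fin m → Fin m) : ℕ :=
  Nat.card (Quotient (orbitSetoid f))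

/-- `S` is a union of blocks of the partition `T`. -/
def IsBlockUnion {m : ℕ} (T : Setoid (Fin m)) (S : Set (Fin m)) : Prop :=
  ∀ x ∈ S, ∀ y, T.r x y → y ∈ S

/-- `S` is invariant under `f`. -/
def MInvariant {m : ℕ} (f : Fin m → Fin m) (S : Set (Fin m)) : Prop :=
  ∀ x ∈ S, f x ∈ S

/-- The meandric system `M_{π,ρ}` is reducible: some proper subinterval
`{a,…,b}` of `{1,…,2n}` is invariant under `M_{π,ρ}`. -/
noncomputable def Reducible {n : ℕ} (π ρ : Setoid (Fin n)) : Prop :=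
  ∃ a b : Fin (2*n), a ≤ b ∧ b.val - a.val < 2*n - 1 ∧
    MInvariant (meanderMap π ρ) {x | a ≤ x ∧ x ≤ b}

/-- The join in the lattice of non-crossing partitions: the smallest
non-crossing partition above both `π` and `ρ`. -/
noncomputable def ncJoin {m : ℕ} (π ρ : Setoid (Fin m)) : Setoid (Fin m) :=
  sInf {τ | IsNC τ ∧ π ≤ τ ∧ ρ ≤ τ}

/-- The moment-cumulant formula of free probability: `mom n` is the sum over all
non-crossing partitions of `{1,…,n}` of the products of cumulants `κ` indexed
by the block sizes.  This uniquely determines the free cumulants `κ n`, `n ≥ 1`,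
of a sequence of moments. -/
def MomCum {F : Type*} [Field F] (mom κ : ℕ → F) : Prop :=
  ∀ n : ℕ, 0 < n →
    mom n = ∑ᶠ S ∈ {S : Setoid (Fin n) | IsNC S}, ∏ᶠ B ∈ Setoid.classes S, κ B.ncard

/-- The number of irreducible meandric systems on `2k` bridges, described as the
number of pairs `(π,ρ) ∈ NC(k)²` with `π ∨ ρ = 1_k`, `π ∧ ρ = 0_k`. -/
noncomputable def mirr (k : ℕ) : ℕ :=
  Nat.card {pr : Setoid (Fin k) × Setoid (Fin k) //
    IsNC pr.1 ∧ IsNC pr.2 ∧ ncJoin pr.1 pr.2 = ⊤ ∧ pr.1 ⊓ pr.2 = ⊥}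

/-- The number of pairs `(π,ρ) ∈ NC(n)²` whose meandric system `M_{π,ρ}` has
exactly `k` orbits (connected components). -/
noncomputable def mcount (n k : ℕ) : ℕ :=
  Nat.card {pr : Setoid (Fin n) × Setoid (Fin n) //
    IsNC pr.1 ∧ IsNC pr.2 ∧ numOrbits (meanderMap pr.1 pr.2) = k}

/-- The number of meanders on `2n` bridges. -/
noncomputable def meanderNum (n : ℕ) : ℕ := mcount n 1
section Basic

variable {n : ℕ} (S : Setoid (Fin n))

lemma mem_blockOf {i j : Fin n} : j ∈ blockOf S i ↔ S.r i j := by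
  simp [blockOf]

lemma self_mem_blockOf (i : Fin n) : i ∈ blockOf S i := by
  simp [blockOf, S.iseqv.refl i]

lemma blockOf_eq_of_rel {i j : Fin n} (h : S.r i j) : blockOf S i = blockOf S j := by
  ext x
  simp only [mem_blockOf]
  exact ⟨fun hx => S.iseqv.trans (S.iseqv.symm h) hx, fun hx => S.iseqv.trans h hx⟩

lemma nextP_mem (i : Fin n) : nextP S i ∈ blockOf S i := by
  unfold nextP
  split
  · exact (Finset.mem_filter.mp (Finset.min'_mem _ _)).1
  · exact Finset.min'_mem _ _

lemma nextP_rel (i : Fin n) : S.r i (nextP S i) := (mem_blockOf S).mp (nextP_mem S i)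

lemma prevP_mem (i : Fin n) : prevP S i ∈ blockOf S i := by
  unfold prevP
  split
  · exact (Finset.mem_filter.mp (Finset.max'_mem _ _)).1
  · exact Finset.max'_mem _ _

lemma prevP_rel (i : Fin n) : S.r i (prevP S i) := (mem_blockOf S).mp (prevP_mem S i)

/-- If there is a block element above `i`, `nextP` is above `i`. -/
lemma lt_nextP {i x : Fin n} (hx : x ∈ blockOf S i) (hix : i < x) : i < nextP S i := by
  have hne : ((blockOf S i).filter (fun j => i < j)).Nonempty :=
    ⟨x, Finset.mem_filter.mpr ⟨hx, hix⟩⟩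
  unfold nextP
  rw [dif_pos hne]
  exact (Finset.mem_filter.mp (Finset.min'_mem _ hne)).2

/-- `nextP` is the least block element above `i`, when above. -/
lemma nextP_le {i x : Fin n} (hx : x ∈ blockOf S i) (hix : i < x) : nextP S i ≤ x := by
  have hne : ((blockOf S i).filter (fun j => i < j)).Nonempty :=
    ⟨x, Finset.mem_filter.mpr ⟨hx, hix⟩⟩
  unfold nextP
  rw [dif_pos hne]
  apply Finset.min'_le
  exact Finset.mem_filter.mpr ⟨hx, hix⟩

/-- If `nextP S i ≤ i` then `i` is the maximum of its block. -/
lemma le_of_nextP_le {i x : Fin n} (hni : nextP S i ≤ i) (hx : x ∈ blockOf S i) : x ≤ i := by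
  by_contra hc
  push_neg at hc
  exact absurd (lt_of_lt_of_le (lt_nextP S hx hc) hni) (lt_irrefl i)

/-- If `nextP S i ≤ i` then it is the minimum of the block. -/
lemma nextP_le_of_wrap {i x : Fin n} (hni : nextP S i ≤ i) (hx : x ∈ blockOf S i) :
    nextP S i ≤ x := by
  have hne : ¬ ((blockOf S i).filter (fun j => i < j)).Nonempty := by
    rintro ⟨y, hy⟩
    rw [Finset.mem_filter] at hy
    exact absurd (lt_of_lt_of_le (lt_nextP S hy.1 hy.2) hni) (lt_irrefl i)
  unfold nextP
  rw [dif_neg hne]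
  exact Finset.min'_le _ _ hx

lemma prevP_lt {i x : Fin n} (hx : x ∈ blockOf S i) (hix : x < i) : prevP S i < i := by
  have hne : ((blockOf S i).filter (fun j => j < i)).Nonempty :=
    ⟨x, Finset.mem_filter.mpr ⟨hx, hix⟩⟩
  unfold prevP
  rw [dif_pos hne]
  exact (Finset.mem_filter.mp (Finset.max'_mem _ hne)).2

lemma le_prevP {i x : Fin n} (hx : x ∈ blockOf S i) (hix : x < i) : x ≤ prevP S i := by
  have hne : ((blockOf S i).filter (fun j => j < i)).Nonempty :=
    ⟨x, Finset.mem_filter.mpr ⟨hx, hix⟩⟩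
  unfold prevP
  rw [dif_pos hne]
  apply Finset.le_max'
  exact Finset.mem_filter.mpr ⟨hx, hix⟩

lemma le_of_le_prevP {i x : Fin n} (hpi : i ≤ prevP S i) (hx : x ∈ blockOf S i) : i ≤ x := by
  by_contra hc
  push_neg at hc
  exact absurd (lt_of_le_of_lt hpi (prevP_lt S hx hc)) (lt_irrefl i)

lemma le_prevP_of_wrap {i x : Fin n} (hpi : i ≤ prevP S i) (hx : x ∈ blockOf S i) :
    x ≤ prevP S i := by
  have hne : ¬ ((blockOf S i).filter (fun j => j < i)).Nonempty := by
    rintro ⟨y, hy⟩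
    rw [Finset.mem_filter] at hy
    exact absurd (lt_of_le_of_lt hpi (prevP_lt S hy.1 hy.2)) (lt_irrefl i)
  unfold prevP
  rw [dif_neg hne]
  exact Finset.le_max' _ _ hx

lemma prevP_nextP (i : Fin n) : prevP S (nextP S i) = i := by
  set k := nextP S i with hk
  have hrel : S.r i k := nextP_rel S i
  have hblock : blockOf S k = blockOf S i := (blockOf_eq_of_rel S hrel).symm
  rcases lt_or_ge i k with hik | hki
  · -- k is least block element above i; so i is the largest block element below k
    have h1 : i ∈ (blockOf S k).filter (fun j => j < k) := by
      rw [hblock]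
      exact Finset.mem_filter.mpr ⟨self_mem_blockOf S i, hik⟩
    have hne : ((blockOf S k).filter (fun j => j < k)).Nonempty := ⟨i, h1⟩
    unfold prevP
    rw [dif_pos hne]
    apply le_antisymm
    · apply Finset.max'_le
      intro y hy
      rw [Finset.mem_filter, hblock] at hy
      by_contra hc
      push_neg at hc
      exact absurd (nextP_le S hy.1 hc) (not_le.mpr hy.2)
    · exact Finset.le_max' _ _ h1
  · -- wrap case: k = min of block, i = max of block
    have hne : ¬ ((blockOf S k).filter (fun j => j < k)).Nonempty := by
      rintro ⟨y, hy⟩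
      rw [Finset.mem_filter, hblock] at hy
      exact absurd (nextP_le_of_wrap S hki hy.1) (not_le.mpr hy.2)
    unfold prevP
    rw [dif_neg hne]
    apply le_antisymm
    · apply Finset.max'_le
      intro y hy
      rw [hblock] at hy
      exact le_of_nextP_le S hki hy
    · apply Finset.le_max'
      rw [hblock]; exact self_mem_blockOf S i

lemma nextP_prevP (i : Fin n) : nextP S (prevP S i) = i := by
  set k := prevP S i with hk
  have hrel : S.r i k := prevP_rel S i
  have hblock : blockOf S k = blockOf S i := (blockOf_eq_of_rel S hrel).symm
  rcases lt_or_ge k i with hik | hki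
  · have h1 : i ∈ (blockOf S k).filter (fun j => k < j) := by
      rw [hblock]
      exact Finset.mem_filter.mpr ⟨self_mem_blockOf S i, hik⟩
    have hne : ((blockOf S k).filter (fun j => k < j)).Nonempty := ⟨i, h1⟩
    unfold nextP
    rw [dif_pos hne]
    apply le_antisymm
    · exact Finset.min'_le _ _ h1
    · apply Finset.le_min'
      intro y hy
      rw [Finset.mem_filter, hblock] at hy
      by_contra hc
      push_neg at hc
      exact absurd (le_prevP S hy.1 hc) (not_le.mpr hy.2)
  · have hne : ¬ ((blockOf S k).filter (fun j => k < j)).Nonempty := by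
      rintro ⟨y, hy⟩
      rw [Finset.mem_filter, hblock] at hy
      exact absurd (le_prevP_of_wrap S hki hy.1) (not_le.mpr hy.2)
    unfold nextP
    rw [dif_neg hne]
    apply le_antisymm
    · apply Finset.min'_le
      rw [hblock]; exact self_mem_blockOf S i
    · apply Finset.le_min'
      intro y hy
      rw [hblock] at hy
      exact le_of_le_prevP S hki hy

end Basic
instance setoidFinite {α : Type*} [Finite α] : Finite (Setoid α) :=
  Finite.of_injective (fun S : Setoid α => S.r)
    (fun S T h => Setoid.ext (fun a b => by rw [show S.r = T.r from h]))

section EqvGenHelp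

variable {α : Type*}

lemma eqvGen_mono' {r p : α → α → Prop} (h : ∀ a b, r a b → Relation.EqvGen p a b)
    {a b : α} (hab : Relation.EqvGen r a b) : Relation.EqvGen p a b := by
  induction hab with
  | rel x y hxy => exact h x y hxy
  | refl x => exact Relation.EqvGen.refl x
  | symm x y _ ih => exact Relation.EqvGen.symm _ _ ih
  | trans x y z _ _ ih1 ih2 => exact Relation.EqvGen.trans _ _ _ ih1 ih2

lemma eqvGen_invariant {r : α → α → Prop} (P : α → Prop)
    (h : ∀ a b, r a b → (P a ↔ P b)) {a b : α} (hab : Relation.EqvGen r a b) :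
    P a ↔ P b := by
  induction hab with
  | rel x y hxy => exact h x y hxy
  | refl x => exact Iff.rfl
  | symm x y _ ih => exact ih.symm
  | trans x y z _ _ ih1 ih2 => exact ih1.trans ih2

lemma eqvGen_to_setoid {r : α → α → Prop} (S : Setoid α) (h : ∀ a b, r a b → S.r a b)
    {a b : α} (hab : Relation.EqvGen r a b) : S.r a b := by
  induction hab with
  | rel x y hxy => exact h x y hxy
  | refl x => exact S.iseqv.refl x
  | symm x y _ ih => exact S.iseqv.symm ih
  | trans x y z _ _ ih1 ih2 => exact S.iseqv.trans ih1 ih2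

end EqvGenHelp

section BlockGen

variable {n : ℕ} (S : Setoid (Fin n))

/-- minimum of the block of `a`. -/
noncomputable def minB (a : Fin n) : Fin n := (blockOf S a).min' (blockOf_nonempty S a)

lemma minB_mem (a : Fin n) : minB S a ∈ blockOf S a := Finset.min'_mem _ _

lemma minB_eq_of_rel {a b : Fin n} (h : S.r a b) : minB S a = minB S b := by
  unfold minB
  congr 1
  exact blockOf_eq_of_rel S h

lemma eqvGen_nextP_toMin (a : Fin n) :
    Relation.EqvGen (fun x y => nextP S x = y) a (minB S a) := by
  rcases eq_or_lt_of_le (show minB S a ≤ a from Finset.min'_le _ a (self_mem_blockOf S a)) with heq | hlt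
  · rw [heq]
    exact Relation.EqvGen.refl a
  · have hpa : prevP S a < a := prevP_lt S (minB_mem S a) hlt
    have hrel : Relation.EqvGen (fun x y => nextP S x = y) (prevP S a) a :=
      Relation.EqvGen.rel _ _ (nextP_prevP S a)
    have hmin : minB S (prevP S a) = minB S a := minB_eq_of_rel S (S.iseqv.symm (prevP_rel S a))
    have ih := eqvGen_nextP_toMin (prevP S a)
    exact Relation.EqvGen.trans _ _ _ (Relation.EqvGen.symm _ _ hrel) (hmin ▸ ih)
termination_by a.val

lemma orbitSetoid_nextP (S : Setoid (Fin n)) : orbitSetoid (nextP S) = S := by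
  apply Setoid.ext
  intro a b
  constructor
  · intro h
    refine eqvGen_to_setoid S (fun x y hxy => ?_) h
    exact hxy ▸ nextP_rel S x
  · intro h
    have h1 := eqvGen_nextP_toMin S a
    have h2 := eqvGen_nextP_toMin S b
    rw [minB_eq_of_rel S h] at h1
    exact Relation.EqvGen.trans _ _ _ h1 (Relation.EqvGen.symm _ _ h2)

lemma orbitSetoid_r {m : ℕ} (f : Fin m → Fin m) (a b : Fin m) :
    (orbitSetoid f).r a b ↔ Relation.EqvGen (fun x y => f x = y) a b := Iff.rfl

end BlockGen

section DEvenOdd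

variable {n : ℕ}

@[simp] lemma dEven_val (j : Fin n) : (dEven j).val = 2 * j.val := rfl
@[simp] lemma dOdd_val (j : Fin n) : (dOdd j).val = 2 * j.val + 1 := rfl

lemma dEven_ne_dOdd (j k : Fin n) : dEven j ≠ dOdd k := by
  intro h
  have := congrArg Fin.val h
  simp at this
  omega

/-- every element of `Fin (2*n)` is `dEven` or `dOdd` of its half -/
lemma even_or_odd_half (x : Fin (2*n)) :
    (∃ j : Fin n, x = dEven j) ∨ (∃ j : Fin n, x = dOdd j) := by
  have hx := x.isLt
  rcases Nat.even_or_odd x.val with he | ho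
  · left
    refine ⟨⟨x.val / 2, by omega⟩, ?_⟩
    apply Fin.ext
    simp only [dEven_val]
    obtain ⟨c, hc⟩ := he
    omega
  · right
    refine ⟨⟨x.val / 2, by omega⟩, ?_⟩
    apply Fin.ext
    simp only [dOdd_val]
    obtain ⟨c, hc⟩ := ho
    omega

lemma meanderMap_dEven (π ρ : Setoid (Fin n)) (j : Fin n) :
    meanderMap π ρ (dEven j) = dOdd (prevP π j) := by
  unfold meanderMap
  have h2 : (dEven j).val % 2 = 0 := by simp [Nat.mul_mod_right]
  rw [if_pos h2]
  congr 1
  apply Fin.ext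
  simp

lemma meanderMap_dOdd (π ρ : Setoid (Fin n)) (j : Fin n) :
    meanderMap π ρ (dOdd j) = dEven (nextP ρ j) := by
  unfold meanderMap
  have h2 : ¬ ((dOdd j).val % 2 = 0) := by simp [Nat.add_mul_mod_self_left]
  rw [if_neg h2]
  congr 1
  apply congrArg
  apply Fin.ext
  simp
  omega

end DEvenOdd

section PhiF

variable {n : ℕ}

/-- the involution on `Fin (2*n)` associated to a partition of `Fin n` -/
noncomputable def phiF (S : Setoid (Fin n)) : Fin (2*n) → Fin (2*n) := meanderMap S S

lemma phiF_dEven (S : Setoid (Fin n)) (j : Fin n) : phiF S (dEven j) = dOdd (prevP S j) :=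
  meanderMap_dEven S S j

lemma phiF_dOdd (S : Setoid (Fin n)) (j : Fin n) : phiF S (dOdd j) = dEven (nextP S j) :=
  meanderMap_dOdd S S j

lemma phiF_involutive (S : Setoid (Fin n)) : Function.Involutive (phiF S) := by
  intro x
  rcases even_or_odd_half x with ⟨j, rfl⟩ | ⟨j, rfl⟩
  · rw [phiF_dEven, phiF_dOdd, nextP_prevP]
  · rw [phiF_dOdd, phiF_dEven, prevP_nextP]

lemma phiF_ne (S : Setoid (Fin n)) (x : Fin (2*n)) : phiF S x ≠ x := by
  rcases even_or_odd_half x with ⟨j, rfl⟩ | ⟨j, rfl⟩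
  · rw [phiF_dEven]
    intro h
    exact dEven_ne_dOdd _ _ h.symm
  · rw [phiF_dOdd]
    intro h
    exact dEven_ne_dOdd _ _ h

/-- the setoid generated by two functions -/
def joinSetoid {m : ℕ} (f g : Fin m → Fin m) : Setoid (Fin m) :=
  Relation.EqvGen.setoid (fun a b => f a = b ∨ g a = b)

lemma joinSetoid_r {m : ℕ} (f g : Fin m → Fin m) (a b : Fin m) :
    (joinSetoid f g).r a b ↔ Relation.EqvGen (fun x y => f x = y ∨ g x = y) a b := Iff.rfl

lemma orbitSetoid_meanderMap (π ρ : Setoid (Fin n)) :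
    orbitSetoid (meanderMap π ρ) = joinSetoid (phiF π) (phiF ρ) := by
  apply Setoid.ext
  intro a b
  constructor
  · intro h
    refine eqvGen_mono' (fun x y hxy => Relation.EqvGen.rel x y ?_) h
    subst hxy
    rcases even_or_odd_half x with ⟨j, rfl⟩ | ⟨j, rfl⟩
    · left; rw [phiF_dEven, meanderMap_dEven]
    · right; rw [phiF_dOdd, meanderMap_dOdd]
  · intro h
    refine eqvGen_mono' (fun x y hxy => ?_) h
    rcases hxy with hxy | hxy
    · -- phiF π x = y
      rcases even_or_odd_half x with ⟨j, rfl⟩ | ⟨j, rfl⟩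
      · rw [phiF_dEven] at hxy
        rw [← hxy, ← meanderMap_dEven π ρ]
        exact Relation.EqvGen.rel _ _ rfl
      · -- x odd : use backwards step from y
        rw [phiF_dOdd] at hxy
        apply Relation.EqvGen.symm
        rw [← hxy]
        have : meanderMap π ρ (dEven (nextP π j)) = dOdd j := by
          rw [meanderMap_dEven, prevP_nextP]
        exact Relation.EqvGen.rel _ _ this
    · rcases even_or_odd_half x with ⟨j, rfl⟩ | ⟨j, rfl⟩
      · rw [phiF_dEven] at hxy
        apply Relation.EqvGen.symm
        rw [← hxy]
        have : meanderMap π ρ (dOdd (prevP ρ j)) = dEven j := by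
          rw [meanderMap_dOdd, nextP_prevP]
        exact Relation.EqvGen.rel _ _ this
      · rw [phiF_dOdd] at hxy
        rw [← hxy, ← meanderMap_dOdd π ρ]
        exact Relation.EqvGen.rel _ _ rfl

end PhiF
section CrossFree

/-- non-crossing condition for arcs of a map -/
def CrossFree {m : ℕ} (f : Fin m → Fin m) : Prop :=
  ∀ a b : Fin m, a < b → b < f a → f a < f b → False

/-- non-crossing fixed-point-free involution -/
def IsNCInv {m : ℕ} (f : Fin m → Fin m) : Prop :=
  Function.Involutive f ∧ (∀ x, f x ≠ x) ∧ CrossFree f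

variable {n : ℕ}

lemma phiF_crossFree (S : Setoid (Fin n)) (hS : IsNC S) : CrossFree (phiF S) := by
  intro a b hab hbfa hfafb
  rcases even_or_odd_half a with ⟨j, rfl⟩ | ⟨j, rfl⟩ <;>
    rcases even_or_odd_half b with ⟨k, rfl⟩ | ⟨k, rfl⟩
  · -- a = dEven j, b = dEven k
    rw [phiF_dEven] at hbfa hfafb
    rw [phiF_dEven] at hfafb
    rw [Fin.lt_def] at hab hbfa hfafb
    simp only [dEven_val, dOdd_val] at hab hbfa hfafb
    have h1 : j.val < k.val := by omega
    have h2 : k.val ≤ (prevP S j).val := by omega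
    have h3 : (prevP S j).val < (prevP S k).val := by omega
    by_cases hr : S.r j k
    · have hmem : prevP S k ∈ blockOf S j := by
        rw [blockOf_eq_of_rel S hr]; exact prevP_mem S k
      have hwrap : j ≤ prevP S j := by
        rw [Fin.le_def]; omega
      have := le_prevP_of_wrap S hwrap hmem
      rw [Fin.le_def] at this; omega
    · have hkpj : k.val ≠ (prevP S j).val := by
        intro hc
        exact hr (S.iseqv.trans (prevP_rel S j) (S.iseqv.symm (Fin.ext hc ▸ S.iseqv.refl k)))
      exact hr (hS j k (prevP S j) (prevP S k) (Fin.lt_def.mpr h1)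
        (Fin.lt_def.mpr (by omega)) (Fin.lt_def.mpr h3) (prevP_rel S j) (prevP_rel S k))
  · -- a = dEven j, b = dOdd k
    rw [phiF_dEven] at hbfa hfafb
    rw [phiF_dOdd] at hfafb
    rw [Fin.lt_def] at hab hbfa hfafb
    simp only [dEven_val, dOdd_val] at hab hbfa hfafb
    have h1 : j.val ≤ k.val := by omega
    have h2 : k.val < (prevP S j).val := by omega
    have h3 : (prevP S j).val < (nextP S k).val := by omega
    by_cases hr : S.r j k
    · have hmem : prevP S j ∈ blockOf S k := by
        rw [← blockOf_eq_of_rel S hr]; exact prevP_mem S j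
      have := nextP_le S hmem (Fin.lt_def.mpr h2)
      rw [Fin.le_def] at this; omega
    · have hjk : j.val < k.val := by
        rcases Nat.lt_or_ge j.val k.val with h | h
        · exact h
        · exact absurd (Fin.ext (le_antisymm h1 h) : j = k) (fun hc => hr (hc ▸ S.iseqv.refl j))
      exact hr (hS j k (prevP S j) (nextP S k) (Fin.lt_def.mpr hjk)
        (Fin.lt_def.mpr h2) (Fin.lt_def.mpr h3) (prevP_rel S j) (nextP_rel S k))
  · -- a = dOdd j, b = dEven k
    rw [phiF_dOdd] at hbfa hfafb
    rw [phiF_dEven] at hfafb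
    rw [Fin.lt_def] at hab hbfa hfafb
    simp only [dEven_val, dOdd_val] at hab hbfa hfafb
    have h1 : j.val < k.val := by omega
    have h2 : k.val < (nextP S j).val := by omega
    have h3 : (nextP S j).val ≤ (prevP S k).val := by omega
    by_cases hr : S.r j k
    · have hmem : k ∈ blockOf S j := (mem_blockOf S).mpr hr
      have := nextP_le S hmem (Fin.lt_def.mpr h1)
      rw [Fin.le_def] at this; omega
    · rcases eq_or_lt_of_le h3 with heq | hlt
      · have hh : nextP S j = prevP S k := Fin.ext heq
        exact hr (S.iseqv.trans (nextP_rel S j) (hh ▸ S.iseqv.symm (prevP_rel S k)))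
      · exact hr (hS j k (nextP S j) (prevP S k) (Fin.lt_def.mpr h1)
          (Fin.lt_def.mpr h2) (Fin.lt_def.mpr hlt) (nextP_rel S j) (prevP_rel S k))
  · -- a = dOdd j, b = dOdd k
    rw [phiF_dOdd] at hbfa hfafb
    rw [phiF_dOdd] at hfafb
    rw [Fin.lt_def] at hab hbfa hfafb
    simp only [dEven_val, dOdd_val] at hab hbfa hfafb
    have h1 : j.val < k.val := by omega
    have h2 : k.val < (nextP S j).val := by omega
    have h3 : (nextP S j).val < (nextP S k).val := by omega
    by_cases hr : S.r j k
    · have hmem : k ∈ blockOf S j := (mem_blockOf S).mpr hr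
      have := nextP_le S hmem (Fin.lt_def.mpr h1)
      rw [Fin.le_def] at this; omega
    · exact hr (hS j k (nextP S j) (nextP S k) (Fin.lt_def.mpr h1)
        (Fin.lt_def.mpr h2) (Fin.lt_def.mpr h3) (nextP_rel S j) (nextP_rel S k))

lemma phiF_isNCInv (S : Setoid (Fin n)) (hS : IsNC S) : IsNCInv (phiF S) :=
  ⟨phiF_involutive S, phiF_ne S, phiF_crossFree S hS⟩

end CrossFree
section Parity

variable {m : ℕ}

/-- a finset closed under a fixed-point-free involution has even cardinality -/
lemma even_card_of_invol {f : Fin m → Fin m} (hinv : Function.Involutive f)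
    (hne : ∀ x, f x ≠ x) (s : Finset (Fin m)) (hs : ∀ x ∈ s, f x ∈ s) : Even s.card := by
  classical
  have hsplit : s = (s.filter (fun x => x < f x)) ∪ (s.filter (fun x => f x < x)) := by
    ext x
    simp only [Finset.mem_union, Finset.mem_filter]
    constructor
    · intro hx
      rcases lt_trichotomy x (f x) with h | h | h
      · exact Or.inl ⟨hx, h⟩
      · exact absurd h.symm (hne x)
      · exact Or.inr ⟨hx, h⟩
    · rintro (⟨hx, _⟩ | ⟨hx, _⟩) <;> exact hx
  have hdisj : Disjoint (s.filter (fun x => x < f x)) (s.filter (fun x => f x < x)) := by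
    rw [Finset.disjoint_filter]
    intro x _ h1 h2
    exact absurd (h1.trans h2) (lt_irrefl x)
  have hcard : (s.filter (fun x => x < f x)).card = (s.filter (fun x => f x < x)).card := by
    apply Finset.card_bij' (fun a _ => f a) (fun a _ => f a)
    · intro a ha
      rw [Finset.mem_filter] at ha ⊢
      exact ⟨hs a ha.1, by rw [hinv a]; exact ha.2⟩
    · intro a ha
      rw [Finset.mem_filter] at ha ⊢
      exact ⟨hs a ha.1, by rw [hinv a]; exact ha.2⟩
    · intro a _; exact hinv a
    · intro a _; exact hinv a
  rw [hsplit, Finset.card_union_of_disjoint hdisj, ← hcard]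
  exact ⟨_, rfl⟩

/-- interval closure: points strictly under an arc are mapped strictly under the arc -/
lemma ncinv_closure {f : Fin m → Fin m} (h : IsNCInv f) {a b x : Fin m}
    (hfa : f a = b) (hab : a < b) (h1 : a < x) (h2 : x < b) : a < f x ∧ f x < b := by
  obtain ⟨hinv, hne, hcf⟩ := h
  have hfb : f b = a := by rw [← hfa, hinv]
  have hxa : f x ≠ a := by
    intro hc
    have : x = f a := by rw [← hc, hinv]
    rw [hfa] at this
    exact absurd (this ▸ h2) (lt_irrefl b)
  have hxb : f x ≠ b := by
    intro hc
    have : x = f b := by rw [← hc, hinv]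
    rw [hfb] at this
    exact absurd (this ▸ h1) (lt_irrefl a)
  constructor
  · by_contra hc
    push_neg at hc
    have hlt : f x < a := lt_of_le_of_ne hc hxa
    exact hcf (f x) a hlt (by rw [hinv]; exact h1) (by rw [hinv, hfa]; exact h2)
  · by_contra hc
    push_neg at hc
    have hlt : b < f x := lt_of_le_of_ne hc (Ne.symm hxb)
    exact hcf a x h1 (hfa ▸ h2) (hfa ▸ hlt)

/-- arcs of a non-crossing fixed-point-free involution connect opposite parities -/
lemma ncinv_parity {f : Fin m → Fin m} (h : IsNCInv f) (x : Fin m) :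
    (f x).val % 2 ≠ x.val % 2 := by
  -- enough to handle the case x < f x
  have main : ∀ y : Fin m, y < f y → (f y).val % 2 ≠ y.val % 2 := by
    intro y hy
    have hcl : ∀ z ∈ Finset.Ioo y (f y), f z ∈ Finset.Ioo y (f y) := by
      intro z hz
      rw [Finset.mem_Ioo] at hz ⊢
      exact ncinv_closure h rfl hy hz.1 hz.2
    have hev := even_card_of_invol h.1 h.2.1 _ hcl
    rw [Fin.card_Ioo] at hev
    have hlt : y.val < (f y).val := hy
    obtain ⟨c, hc⟩ := hev
    omega
  rcases lt_trichotomy x (f x) with hlt | heq | hgt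
  · exact main x hlt
  · exact absurd heq.symm (h.2.1 x)
  · have := main (f x) (by rw [h.1 x]; exact hgt)
    rw [h.1 x] at this
    omega

end Parity
section GMap

variable {n : ℕ}

lemma ncinv_even_val {f : Fin (2*n) → Fin (2*n)} (h : IsNCInv f) (j : Fin n) :
    (f (dOdd j)).val % 2 = 0 := by
  have := ncinv_parity h (dOdd j)
  simp only [dOdd_val] at this
  omega

lemma ncinv_odd_val {f : Fin (2*n) → Fin (2*n)} (h : IsNCInv f) (j : Fin n) :
    (f (dEven j)).val % 2 = 1 := by
  have := ncinv_parity h (dEven j)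
  simp only [dEven_val] at this
  omega

/-- successor map associated to a non-crossing involution -/
noncomputable def gMap {f : Fin (2*n) → Fin (2*n)} (h : IsNCInv f) : Fin n → Fin n :=
  fun j => ⟨(f (dOdd j)).val / 2, by have := (f (dOdd j)).isLt; omega⟩

noncomputable def pMap {f : Fin (2*n) → Fin (2*n)} (h : IsNCInv f) : Fin n → Fin n :=
  fun j => ⟨(f (dEven j)).val / 2, by have := (f (dEven j)).isLt; omega⟩

lemma gMap_spec {f : Fin (2*n) → Fin (2*n)} (h : IsNCInv f) (j : Fin n) :
    f (dOdd j) = dEven (gMap h j) := by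
  have hpar := ncinv_even_val h j
  apply Fin.ext
  simp only [dEven_val, gMap]
  omega

lemma pMap_spec {f : Fin (2*n) → Fin (2*n)} (h : IsNCInv f) (j : Fin n) :
    f (dEven j) = dOdd (pMap h j) := by
  have hpar := ncinv_odd_val h j
  apply Fin.ext
  simp only [dOdd_val, pMap]
  omega

lemma f_dEven_gMap {f : Fin (2*n) → Fin (2*n)} (h : IsNCInv f) (j : Fin n) :
    f (dEven (gMap h j)) = dOdd j := by
  rw [← gMap_spec h j, h.1]

lemma f_dOdd_pMap {f : Fin (2*n) → Fin (2*n)} (h : IsNCInv f) (j : Fin n) :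
    f (dOdd (pMap h j)) = dEven j := by
  rw [← pMap_spec h j, h.1]

lemma gMap_pMap {f : Fin (2*n) → Fin (2*n)} (h : IsNCInv f) (j : Fin n) :
    gMap h (pMap h j) = j := by
  have h1 := gMap_spec h (pMap h j)
  rw [f_dOdd_pMap h j] at h1
  have := congrArg Fin.val h1
  simp only [dEven_val] at this
  exact Fin.ext (by omega)

lemma pMap_gMap {f : Fin (2*n) → Fin (2*n)} (h : IsNCInv f) (j : Fin n) :
    pMap h (gMap h j) = j := by
  have h1 := pMap_spec h (gMap h j)
  rw [f_dEven_gMap h j] at h1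
  have := congrArg Fin.val h1
  simp only [dOdd_val] at this
  exact Fin.ext (by omega)

lemma gMap_injective {f : Fin (2*n) → Fin (2*n)} (h : IsNCInv f) :
    Function.Injective (gMap h) := by
  intro a b hab
  have := congrArg (pMap h) hab
  rwa [pMap_gMap, pMap_gMap] at this

/-- bi-closedness of the open interval under an up-step of `gMap` -/
lemma gMap_biclosed_up {f : Fin (2*n) → Fin (2*n)} (h : IsNCInv f) {j : Fin n}
    (hj : j < gMap h j) (m : Fin n) :
    (j < m ∧ m < gMap h j) ↔ (j < gMap h m ∧ gMap h m < gMap h j) := by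
  have harc : f (dOdd j) = dEven (gMap h j) := gMap_spec h j
  have harcLt : (dOdd j : Fin (2*n)) < dEven (gMap h j) := by
    rw [Fin.lt_def]; simp only [dOdd_val, dEven_val]
    have : j.val < (gMap h j).val := hj
    omega
  constructor
  · rintro ⟨h1, h2⟩
    have hmem : (dOdd j : Fin (2*n)) < dOdd m ∧ (dOdd m : Fin (2*n)) < dEven (gMap h j) := by
      rw [Fin.lt_def, Fin.lt_def]
      simp only [dOdd_val, dEven_val]
      have e1 : j.val < m.val := h1
      have e2 : m.val < (gMap h j).val := h2
      omega
    have := ncinv_closure h harc harcLt hmem.1 hmem.2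
    rw [gMap_spec h m] at this
    rw [Fin.lt_def, Fin.lt_def] at this
    simp only [dOdd_val, dEven_val] at this
    exact ⟨by rw [Fin.lt_def]; omega, by rw [Fin.lt_def]; omega⟩
  · rintro ⟨h1, h2⟩
    have hmem : (dOdd j : Fin (2*n)) < dEven (gMap h m) ∧
        (dEven (gMap h m) : Fin (2*n)) < dEven (gMap h j) := by
      rw [Fin.lt_def, Fin.lt_def]
      simp only [dOdd_val, dEven_val]
      have e1 : j.val < (gMap h m).val := h1
      have e2 : (gMap h m).val < (gMap h j).val := h2
      omega
    have := ncinv_closure h harc harcLt hmem.1 hmem.2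
    rw [f_dEven_gMap h m] at this
    rw [Fin.lt_def, Fin.lt_def] at this
    simp only [dOdd_val, dEven_val] at this
    exact ⟨by rw [Fin.lt_def]; omega, by rw [Fin.lt_def]; omega⟩

/-- bi-closedness of the closed interval under a wrapping step of `gMap` -/
lemma gMap_biclosed_wrap {f : Fin (2*n) → Fin (2*n)} (h : IsNCInv f) {j : Fin n}
    (hj : gMap h j ≤ j) (m : Fin n) :
    (gMap h j ≤ m ∧ m ≤ j) ↔ (gMap h j ≤ gMap h m ∧ gMap h m ≤ j) := by
  have harc : f (dEven (gMap h j)) = dOdd j := f_dEven_gMap h j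
  have harcLt : (dEven (gMap h j) : Fin (2*n)) < dOdd j := by
    rw [Fin.lt_def]; simp only [dOdd_val, dEven_val]
    have : (gMap h j).val ≤ j.val := hj
    omega
  constructor
  · rintro ⟨h1, h2⟩
    rcases eq_or_lt_of_le h2 with heq | hlt
    · -- m = j
      subst heq
      exact ⟨le_refl _, hj⟩
    · have hmem : (dEven (gMap h j) : Fin (2*n)) < dOdd m ∧ (dOdd m : Fin (2*n)) < dOdd j := by
        rw [Fin.lt_def, Fin.lt_def]
        simp only [dOdd_val, dEven_val]
        have e1 : (gMap h j).val ≤ m.val := h1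
        have e2 : m.val < j.val := hlt
        omega
      have := ncinv_closure h harc harcLt hmem.1 hmem.2
      rw [gMap_spec h m] at this
      rw [Fin.lt_def, Fin.lt_def] at this
      simp only [dOdd_val, dEven_val] at this
      exact ⟨by rw [Fin.le_def]; omega, by rw [Fin.le_def]; omega⟩
  · rintro ⟨h1, h2⟩
    rcases eq_or_lt_of_le h1 with heq | hlt
    · -- gMap h m = gMap h j hence m = j
      have : m = j := gMap_injective h heq.symm
      subst this
      exact ⟨hj, le_refl m⟩
    · have hmem : (dEven (gMap h j) : Fin (2*n)) < dEven (gMap h m) ∧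
          (dEven (gMap h m) : Fin (2*n)) < dOdd j := by
        rw [Fin.lt_def, Fin.lt_def]
        simp only [dOdd_val, dEven_val]
        have e1 : (gMap h j).val < (gMap h m).val := hlt
        have e2 : (gMap h m).val ≤ j.val := h2
        omega
      have := ncinv_closure h harc harcLt hmem.1 hmem.2
      rw [f_dEven_gMap h m] at this
      rw [Fin.lt_def, Fin.lt_def] at this
      simp only [dOdd_val, dEven_val] at this
      exact ⟨by rw [Fin.le_def]; omega, by rw [Fin.le_def]; omega⟩

/-- the partition of `Fin n` associated to a non-crossing involution of `Fin (2*n)` -/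
noncomputable def sOf {f : Fin (2*n) → Fin (2*n)} (h : IsNCInv f) : Setoid (Fin n) :=
  orbitSetoid (gMap h)

lemma sOf_r {f : Fin (2*n) → Fin (2*n)} (h : IsNCInv f) (a b : Fin n) :
    (sOf h).r a b ↔ Relation.EqvGen (fun x y => gMap h x = y) a b := Iff.rfl

lemma nextP_sOf {f : Fin (2*n) → Fin (2*n)} (h : IsNCInv f) (j : Fin n) :
    nextP (sOf h) j = gMap h j := by
  have hgmem : gMap h j ∈ blockOf (sOf h) j :=
    (mem_blockOf _).mpr (Relation.EqvGen.rel _ _ rfl)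
  rcases lt_or_ge j (gMap h j) with hup | hwrap
  · -- up case
    apply le_antisymm
    · exact nextP_le _ hgmem hup
    · -- gMap h j ≤ nextP: nextP is a block element > j, and no block element in (j, gMap h j)
      have h1 : j < nextP (sOf h) j := lt_nextP _ hgmem hup
      have h2 : nextP (sOf h) j ∈ blockOf (sOf h) j := nextP_mem _ j
      by_contra hc
      push_neg at hc
      have hinv := eqvGen_invariant (r := fun x y => gMap h x = y) (fun m => j < m ∧ m < gMap h j)
        (fun a b (hab : gMap h a = b) => hab ▸ gMap_biclosed_up h hup a)
        ((sOf_r h _ _).mp ((mem_blockOf _).mp h2))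
      exact absurd (hinv.mpr ⟨h1, hc⟩).1 (lt_irrefl j)
  · -- wrap case: no block element above j
    have hnone : ¬ ((blockOf (sOf h) j).filter (fun x => j < x)).Nonempty := by
      rintro ⟨x, hx⟩
      rw [Finset.mem_filter] at hx
      have hinv := eqvGen_invariant (r := fun x y => gMap h x = y) (fun m => gMap h j ≤ m ∧ m ≤ j)
        (fun a b (hab : gMap h a = b) => hab ▸ gMap_biclosed_wrap h hwrap a)
        ((sOf_r h _ _).mp ((mem_blockOf _).mp hx.1))
      exact absurd hx.2 (not_lt.mpr (hinv.mp ⟨hwrap, le_refl j⟩).2)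
    unfold nextP
    rw [dif_neg hnone]
    apply le_antisymm
    · exact Finset.min'_le _ _ hgmem
    · apply Finset.le_min'
      intro y hy
      have hinv := eqvGen_invariant (r := fun x y => gMap h x = y) (fun m => gMap h j ≤ m ∧ m ≤ j)
        (fun a b (hab : gMap h a = b) => hab ▸ gMap_biclosed_wrap h hwrap a)
        ((sOf_r h _ _).mp ((mem_blockOf _).mp hy))
      exact (hinv.mp ⟨hwrap, le_refl j⟩).1

lemma prevP_sOf {f : Fin (2*n) → Fin (2*n)} (h : IsNCInv f) (j : Fin n) :
    prevP (sOf h) j = pMap h j := by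
  have h1 : nextP (sOf h) (pMap h j) = j := by rw [nextP_sOf, gMap_pMap]
  calc prevP (sOf h) j = prevP (sOf h) (nextP (sOf h) (pMap h j)) := by rw [h1]
  _ = pMap h j := prevP_nextP _ _

lemma phiF_sOf {f : Fin (2*n) → Fin (2*n)} (h : IsNCInv f) : phiF (sOf h) = f := by
  funext x
  rcases even_or_odd_half x with ⟨j, rfl⟩ | ⟨j, rfl⟩
  · rw [phiF_dEven, prevP_sOf]
    exact (pMap_spec h j).symm
  · rw [phiF_dOdd, nextP_sOf]
    exact (gMap_spec h j).symm

/-- the partition associated to a non-crossing involution is non-crossing -/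
lemma sOf_isNC {f : Fin (2*n) → Fin (2*n)} (h : IsNCInv f) : IsNC (sOf h) := by
  intro a b c d hab hbc hcd hac hbd
  by_contra hr
  -- the largest block element of `a`'s block below `b`
  have hamem : a ∈ (blockOf (sOf h) a).filter (fun x => x < b) :=
    Finset.mem_filter.mpr ⟨self_mem_blockOf _ a, hab⟩
  have hne : ((blockOf (sOf h) a).filter (fun x => x < b)).Nonempty := ⟨a, hamem⟩
  set e := ((blockOf (sOf h) a).filter (fun x => x < b)).max' hne with he
  have hemem : e ∈ blockOf (sOf h) a := (Finset.mem_filter.mp (Finset.max'_mem _ hne)).1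
  have heb : e < b := (Finset.mem_filter.mp (Finset.max'_mem _ hne)).2
  have hcmem : c ∈ blockOf (sOf h) e := by
    rw [← blockOf_eq_of_rel _ ((mem_blockOf _).mp hemem)]
    exact (mem_blockOf _).mpr hac
  have hec : e < c := lt_trans heb hbc
  -- e' = nextP = gMap at e
  have he' : e < nextP (sOf h) e := lt_nextP _ hcmem hec
  have he'c : nextP (sOf h) e ≤ c := nextP_le _ hcmem hec
  have hbe' : b < nextP (sOf h) e := by
    rcases lt_trichotomy (nextP (sOf h) e) b with hlt | heq | hgt
    · -- contradiction with maximality of e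
      exfalso
      have : nextP (sOf h) e ∈ (blockOf (sOf h) a).filter (fun x => x < b) := by
        refine Finset.mem_filter.mpr ⟨?_, hlt⟩
        rw [blockOf_eq_of_rel _ ((mem_blockOf _).mp hemem)]
        exact nextP_mem _ e
      exact absurd (Finset.le_max' _ _ this) (not_le.mpr he')
    · exfalso
      apply hr
      have : b ∈ blockOf (sOf h) a := by
        rw [blockOf_eq_of_rel _ ((mem_blockOf _).mp hemem), ← heq]
        exact nextP_mem _ e
      exact (mem_blockOf _).mp this
    · exact hgt
  -- now b is strictly between e and gMap h e
  have hge : nextP (sOf h) e = gMap h e := nextP_sOf h e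
  rw [hge] at he' hbe' he'c
  have hinv := eqvGen_invariant (r := fun x y => gMap h x = y) (fun m => e < m ∧ m < gMap h e)
    (fun x y (hxy : gMap h x = y) => hxy ▸ gMap_biclosed_up h he' x) ((sOf_r h _ _).mp hbd)
  have hd := hinv.mp ⟨heb, hbe'⟩
  exact absurd (lt_of_lt_of_le hd.2 he'c) (not_lt.mpr hcd.le)

end GMap
section Equivs

variable {n : ℕ}

lemma gMap_phiF (S : Setoid (Fin n)) (h : IsNCInv (phiF S)) : gMap h = nextP S := by
  funext j
  apply Fin.ext
  simp only [gMap, phiF_dOdd, dEven_val]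
  omega

lemma sOf_phiF (S : Setoid (Fin n)) (h : IsNCInv (phiF S)) : sOf h = S := by
  unfold sOf
  rw [gMap_phiF S h]
  exact orbitSetoid_nextP S

/-- pairs of non-crossing involutions with non-crossing join -/
def InvPairNC (m : ℕ) : Type :=
  {q : (Fin m → Fin m) × (Fin m → Fin m) //
    IsNCInv q.1 ∧ IsNCInv q.2 ∧ IsNC (joinSetoid q.1 q.2)}

/-- pairs of non-crossing involutions with full join (meanders) -/
def InvPairTop (m : ℕ) : Type :=
  {q : (Fin m → Fin m) × (Fin m → Fin m) //
    IsNCInv q.1 ∧ IsNCInv q.2 ∧ joinSetoid q.1 q.2 = ⊤}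

noncomputable def equivNC (n : ℕ) :
    {pr : Setoid (Fin n) × Setoid (Fin n) //
      IsNC pr.1 ∧ IsNC pr.2 ∧ IsNC (orbitSetoid (meanderMap pr.1 pr.2))} ≃ InvPairNC (2*n) where
  toFun pr := ⟨(phiF pr.1.1, phiF pr.1.2),
    phiF_isNCInv _ pr.2.1, phiF_isNCInv _ pr.2.2.1, by
      have := pr.2.2.2
      rwa [orbitSetoid_meanderMap] at this⟩
  invFun q := ⟨(sOf q.2.1, sOf q.2.2.1), sOf_isNC _, sOf_isNC _, by
    rw [orbitSetoid_meanderMap, phiF_sOf q.2.1, phiF_sOf q.2.2.1]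
    exact q.2.2.2⟩
  left_inv pr := by
    apply Subtype.ext
    apply Prod.ext
    · exact sOf_phiF _ _
    · exact sOf_phiF _ _
  right_inv q := by
    apply Subtype.ext
    apply Prod.ext
    · exact phiF_sOf q.2.1
    · exact phiF_sOf q.2.2.1

lemma numOrbits_eq_one_iff {m : ℕ} (hm : 0 < m) (f : Fin m → Fin m) :
    numOrbits f = 1 ↔ orbitSetoid f = ⊤ := by
  unfold numOrbits
  rw [Nat.card_eq_one_iff_unique]
  constructor
  · rintro ⟨hsub, -⟩
    apply Setoid.ext
    intro a b
    simp only [Setoid.top_def]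
    refine ⟨fun _ => trivial, fun _ => ?_⟩
    have := @Subsingleton.elim _ hsub (Quotient.mk (orbitSetoid f) a) (Quotient.mk (orbitSetoid f) b)
    exact Quotient.exact this
  · intro h
    constructor
    · constructor
      intro x y
      induction x using Quotient.ind
      induction y using Quotient.ind
      apply Quotient.sound
      rw [h]
      trivial
    · have : Nonempty (Fin m) := ⟨⟨0, hm⟩⟩
      exact Nonempty.map (Quotient.mk _) this

noncomputable def equivTop (k : ℕ) (hk : 0 < k) :
    {pr : Setoid (Fin k) × Setoid (Fin k) //
      IsNC pr.1 ∧ IsNC pr.2 ∧ numOrbits (meanderMap pr.1 pr.2) = 1} ≃ InvPairTop (2*k) where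
  toFun pr := ⟨(phiF pr.1.1, phiF pr.1.2),
    phiF_isNCInv _ pr.2.1, phiF_isNCInv _ pr.2.2.1, by
      have := (numOrbits_eq_one_iff (by omega) _).mp pr.2.2.2
      rwa [orbitSetoid_meanderMap] at this⟩
  invFun q := ⟨(sOf q.2.1, sOf q.2.2.1), sOf_isNC _, sOf_isNC _, by
    rw [numOrbits_eq_one_iff (by omega), orbitSetoid_meanderMap, phiF_sOf q.2.1,
      phiF_sOf q.2.2.1]
    exact q.2.2.2⟩
  left_inv pr := by
    apply Subtype.ext
    apply Prod.ext
    · exact sOf_phiF _ _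
    · exact sOf_phiF _ _
  right_inv q := by
    apply Subtype.ext
    apply Prod.ext
    · exact phiF_sOf q.2.1
    · exact phiF_sOf q.2.2.1

lemma meanderNum_eq_card (k : ℕ) (hk : 0 < k) :
    meanderNum k = Nat.card (InvPairTop (2*k)) := by
  unfold meanderNum mcount
  exact Nat.card_congr (equivTop k hk)

/-- a non-crossing fixed-point-free involution forces even size -/
lemma even_of_isNCInv {m : ℕ} {f : Fin m → Fin m} (h : IsNCInv f) : Even m := by
  have := even_card_of_invol h.1 h.2.1 Finset.univ (fun x _ => Finset.mem_univ _)
  rwa [Finset.card_univ, Fintype.card_fin] at this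

lemma invPairTop_empty_of_odd {m : ℕ} (hm : ¬ Even m) : IsEmpty (InvPairTop m) := by
  constructor
  intro q
  exact hm (even_of_isNCInv q.2.1)

end Equivs
section UpDown

variable {M : ℕ}

noncomputable def ordB (B : Set (Fin M)) : Fin (B.ncard) ≃o {x // x ∈ B.toFinset} :=
  B.toFinset.orderIsoOfFin (Set.ncard_eq_toFinset_card' B).symm

noncomputable def upB (B : Set (Fin M)) (i : Fin (B.ncard)) : Fin M := (ordB B i).val

lemma upB_mem (B : Set (Fin M)) (i : Fin (B.ncard)) : upB B i ∈ B := by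
  have := (ordB B i).2
  rwa [Set.mem_toFinset] at this

noncomputable def downB (B : Set (Fin M)) (x : Fin M) (hx : x ∈ B) : Fin (B.ncard) :=
  (ordB B).symm ⟨x, Set.mem_toFinset.mpr hx⟩

lemma upB_downB (B : Set (Fin M)) (x : Fin M) (hx : x ∈ B) : upB B (downB B x hx) = x := by
  unfold upB downB
  rw [OrderIso.apply_symm_apply]

lemma downB_upB (B : Set (Fin M)) (i : Fin (B.ncard)) (h : upB B i ∈ B) :
    downB B (upB B i) h = i := by
  unfold upB downB
  have : (⟨(ordB B i).val, Set.mem_toFinset.mpr h⟩ : {x // x ∈ B.toFinset}) = ordB B i :=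
    Subtype.ext rfl
  rw [this, OrderIso.symm_apply_apply]

lemma upB_lt_iff (B : Set (Fin M)) (i j : Fin (B.ncard)) : upB B i < upB B j ↔ i < j := by
  unfold upB
  exact (ordB B).lt_iff_lt

lemma upB_inj (B : Set (Fin M)) {i j : Fin (B.ncard)} (h : upB B i = upB B j) : i = j := by
  have := (ordB B).injective (Subtype.ext h)
  exact this

/-- restriction of a map to an invariant subset -/
noncomputable def resF (B : Set (Fin M)) (f : Fin M → Fin M) (hf : ∀ x ∈ B, f x ∈ B) :
    Fin (B.ncard) → Fin (B.ncard) :=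
  fun i => downB B (f (upB B i)) (hf _ (upB_mem B i))

lemma upB_resF (B : Set (Fin M)) (f : Fin M → Fin M) (hf : ∀ x ∈ B, f x ∈ B)
    (i : Fin (B.ncard)) : upB B (resF B f hf i) = f (upB B i) :=
  upB_downB _ _ _

lemma resF_isNCInv (B : Set (Fin M)) (f : Fin M → Fin M) (hf : ∀ x ∈ B, f x ∈ B)
    (h : IsNCInv f) : IsNCInv (resF B f hf) := by
  refine ⟨?_, ?_, ?_⟩
  · intro i
    apply upB_inj B
    rw [upB_resF, upB_resF, h.1]
  · intro i hc
    have := congrArg (upB B) hc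
    rw [upB_resF] at this
    exact h.2.1 _ this
  · intro i j h1 h2 h3
    rw [← upB_lt_iff B] at h1 h2 h3
    rw [upB_resF] at h2 h3
    rw [upB_resF] at h3
    exact h.2.2 _ _ h1 h2 h3

/-- membership in an invariant set is invariant along the join relation -/
lemma join_mem_invariant {f g : Fin M → Fin M} (hfi : Function.Involutive f)
    (hgi : Function.Involutive g) {B : Set (Fin M)} (hf : ∀ x ∈ B, f x ∈ B)
    (hg : ∀ x ∈ B, g x ∈ B) {x y : Fin M}
    (hxy : Relation.EqvGen (fun a b => f a = b ∨ g a = b) x y) : x ∈ B ↔ y ∈ B := by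
  refine eqvGen_invariant _ (fun a b hab => ?_) hxy
  rcases hab with hab | hab
  · subst hab
    exact ⟨fun ha => hf a ha, fun hb => by have := hf (f a) hb; rwa [hfi a] at this⟩
  · subst hab
    exact ⟨fun ha => hg a ha, fun hb => by have := hg (g a) hb; rwa [hgi a] at this⟩

/-- transporting a join chain down to the block -/
lemma join_restrict {f g : Fin M → Fin M} (hfi : Function.Involutive f)
    (hgi : Function.Involutive g) {B : Set (Fin M)} (hf : ∀ x ∈ B, f x ∈ B)
    (hg : ∀ x ∈ B, g x ∈ B) {x y : Fin M}
    (hxy : Relation.EqvGen (fun a b => f a = b ∨ g a = b) x y) :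
    ∀ (hx : x ∈ B) (hy : y ∈ B),
      Relation.EqvGen (fun i j => resF B f hf i = j ∨ resF B g hg i = j)
        (downB B x hx) (downB B y hy) := by
  induction hxy with
  | rel a b hab =>
    intro ha hb
    apply Relation.EqvGen.rel
    rcases hab with hab | hab
    · left
      apply upB_inj B
      rw [upB_resF, upB_downB, upB_downB, hab]
    · right
      apply upB_inj B
      rw [upB_resF, upB_downB, upB_downB, hab]
  | refl a =>
    intro ha hb
    exact Relation.EqvGen.refl _
  | symm a b hab ih =>
    intro ha hb
    exact Relation.EqvGen.symm _ _ (ih hb ha)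
  | trans a b c hab hbc ih1 ih2 =>
    intro ha hc
    have hb : b ∈ B := (join_mem_invariant hfi hgi hf hg hab).mp ha
    exact Relation.EqvGen.trans _ _ _ (ih1 ha hb) (ih2 hb hc)

/-- transporting a join chain up from the block -/
lemma join_up {f g : Fin M → Fin M} {B : Set (Fin M)} (hf : ∀ x ∈ B, f x ∈ B)
    (hg : ∀ x ∈ B, g x ∈ B) {i j : Fin (B.ncard)}
    (hij : Relation.EqvGen (fun i j => resF B f hf i = j ∨ resF B g hg i = j) i j) :
    Relation.EqvGen (fun a b => f a = b ∨ g a = b) (upB B i) (upB B j) := by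
  induction hij with
  | rel a b hab =>
    apply Relation.EqvGen.rel
    rcases hab with hab | hab
    · left; rw [← hab, upB_resF]
    · right; rw [← hab, upB_resF]
  | refl a => exact Relation.EqvGen.refl _
  | symm a b _ ih => exact Relation.EqvGen.symm _ _ ih
  | trans a b c _ _ ih1 ih2 => exact Relation.EqvGen.trans _ _ _ ih1 ih2

end UpDown
section Glue

variable {M : ℕ}

lemma setoid_top_r {α : Type*} (a b : α) : (⊤ : Setoid α).r a b := by
  show (⊤ : Setoid α) a b
  rw [Setoid.top_def]
  trivial

/-- the class of `x` -/
def cls (S : Setoid (Fin M)) (x : Fin M) : Set (Fin M) := {y | S.r y x}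

lemma cls_mem_classes (S : Setoid (Fin M)) (x : Fin M) : cls S x ∈ S.classes :=
  Setoid.mem_classes S x

lemma mem_cls (S : Setoid (Fin M)) (x : Fin M) : x ∈ cls S x := S.iseqv.refl x

lemma mem_cls_iff (S : Setoid (Fin M)) {x y : Fin M} : y ∈ cls S x ↔ S.r y x := Iff.rfl

lemma eq_cls_of_mem {S : Setoid (Fin M)} {B : Set (Fin M)} (hB : B ∈ S.classes)
    {x : Fin M} (hx : x ∈ B) : B = cls S x :=
  Setoid.eq_of_mem_classes hB hx (cls_mem_classes S x) (mem_cls S x)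

lemma cls_eq_of_rel {S : Setoid (Fin M)} {x y : Fin M} (h : S.r x y) : cls S x = cls S y := by
  ext z
  exact ⟨fun hz => S.iseqv.trans hz h, fun hz => S.iseqv.trans hz (S.iseqv.symm h)⟩

lemma rel_of_mem_class {S : Setoid (Fin M)} {B : Set (Fin M)} (hB : B ∈ S.classes)
    {x y : Fin M} (hx : x ∈ B) (hy : y ∈ B) : S.r x y := by
  rw [eq_cls_of_mem hB hy] at hx
  exact hx

/-- the pair-of-involutions data over the classes of `S` -/
def PiT (S : Setoid (Fin M)) : Type := ∀ B : S.classes, InvPairTop (B.1.ncard)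

/-- the fiber: pairs of non-crossing involutions whose join is exactly `S` -/
def FibT (S : Setoid (Fin M)) : Type :=
  {q : (Fin M → Fin M) × (Fin M → Fin M) //
    IsNCInv q.1 ∧ IsNCInv q.2 ∧ joinSetoid q.1 q.2 = S}

instance (m : ℕ) : Finite (InvPairTop m) :=
  inferInstanceAs (Finite {q : (Fin m → Fin m) × (Fin m → Fin m) // _})

instance (m : ℕ) : Finite (InvPairNC m) :=
  inferInstanceAs (Finite {q : (Fin m → Fin m) × (Fin m → Fin m) // _})

instance (S : Setoid (Fin M)) : Finite (FibT S) :=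
  inferInstanceAs (Finite {q : (Fin M → Fin M) × (Fin M → Fin M) // _})

instance (S : Setoid (Fin M)) : Finite (PiT S) :=
  inferInstanceAs (Finite (∀ B : S.classes, InvPairTop (B.1.ncard)))

/-- gluing a family of maps on the classes of `S` into a map on `Fin M` -/
noncomputable def glueMap (S : Setoid (Fin M))
    (F : ∀ B : S.classes, Fin (B.1.ncard) → Fin (B.1.ncard)) : Fin M → Fin M :=
  fun x => upB (cls S x) (F ⟨cls S x, cls_mem_classes S x⟩ (downB (cls S x) x (mem_cls S x)))

lemma glueMap_eq (S : Setoid (Fin M)) (F : ∀ B : S.classes, Fin (B.1.ncard) → Fin (B.1.ncard))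
    {B : Set (Fin M)} (hB : B ∈ S.classes) {x : Fin M} (hx : x ∈ B) :
    glueMap S F x = upB B (F ⟨B, hB⟩ (downB B x hx)) := by
  obtain rfl : B = cls S x := eq_cls_of_mem hB hx
  rfl

lemma glueMap_mem (S : Setoid (Fin M)) (F : ∀ B : S.classes, Fin (B.1.ncard) → Fin (B.1.ncard))
    (x : Fin M) : glueMap S F x ∈ cls S x := upB_mem _ _

lemma glueMap_rel (S : Setoid (Fin M)) (F : ∀ B : S.classes, Fin (B.1.ncard) → Fin (B.1.ncard))
    (x : Fin M) : S.r (glueMap S F x) x := glueMap_mem S F x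

lemma glueMap_upB (S : Setoid (Fin M)) (F : ∀ B : S.classes, Fin (B.1.ncard) → Fin (B.1.ncard))
    (B : S.classes) (i : Fin (B.1.ncard)) :
    glueMap S F (upB B.1 i) = upB B.1 (F B i) := by
  rw [glueMap_eq S F B.2 (upB_mem B.1 i), downB_upB]

lemma glueMap_glueMap (S : Setoid (Fin M))
    (F G : ∀ B : S.classes, Fin (B.1.ncard) → Fin (B.1.ncard)) (x : Fin M) :
    glueMap S F (glueMap S G x) =
      upB (cls S x) (F ⟨cls S x, cls_mem_classes S x⟩
        (G ⟨cls S x, cls_mem_classes S x⟩ (downB (cls S x) x (mem_cls S x)))) := by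
  have h1 : glueMap S G x = upB (cls S x)
      (G ⟨cls S x, cls_mem_classes S x⟩ (downB (cls S x) x (mem_cls S x))) := rfl
  rw [h1, glueMap_upB S F ⟨cls S x, cls_mem_classes S x⟩]

/-- the join relation of the glued maps is `S` -/
lemma join_up_generic {m' : ℕ} {f g : Fin M → Fin M} {f' g' : Fin m' → Fin m'}
    (u : Fin m' → Fin M) (hfu : ∀ i, f (u i) = u (f' i)) (hgu : ∀ i, g (u i) = u (g' i))
    {i j : Fin m'} (hij : Relation.EqvGen (fun a b => f' a = b ∨ g' a = b) i j) :
    Relation.EqvGen (fun a b => f a = b ∨ g a = b) (u i) (u j) := by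
  induction hij with
  | rel a b hab =>
    apply Relation.EqvGen.rel
    rcases hab with hab | hab
    · left; rw [hfu, hab]
    · right; rw [hgu, hab]
  | refl a => exact Relation.EqvGen.refl _
  | symm a b _ ih => exact Relation.EqvGen.symm _ _ ih
  | trans a b c _ _ ih1 ih2 => exact Relation.EqvGen.trans _ _ _ ih1 ih2

variable (S : Setoid (Fin M))

/-- glueing an element of `PiT S` -/
noncomputable def glueP (q : PiT S) : (Fin M → Fin M) × (Fin M → Fin M) :=
  (glueMap S (fun B => (q B).1.1), glueMap S (fun B => (q B).1.2))

lemma glueMap_isNCInv (hS : IsNC S)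
    (F : ∀ B : S.classes, Fin (B.1.ncard) → Fin (B.1.ncard))
    (hF : ∀ B : S.classes, IsNCInv (F B)) : IsNCInv (glueMap S F) := by
  refine ⟨?_, ?_, ?_⟩
  · -- involutive
    intro x
    have hcls : cls S (glueMap S F x) = cls S x := cls_eq_of_rel (glueMap_rel S F x)
    calc glueMap S F (glueMap S F x)
        = upB (cls S x) (F ⟨cls S x, cls_mem_classes S x⟩
            (F ⟨cls S x, cls_mem_classes S x⟩ (downB (cls S x) x (mem_cls S x)))) :=
          glueMap_glueMap S F F x
      _ = upB (cls S x) (downB (cls S x) x (mem_cls S x)) := by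
          rw [(hF ⟨cls S x, cls_mem_classes S x⟩).1]
      _ = x := upB_downB _ _ _
  · -- fixed-point free
    intro x hc
    have h2 : upB (cls S x) (F ⟨cls S x, cls_mem_classes S x⟩ (downB (cls S x) x (mem_cls S x)))
        = upB (cls S x) (downB (cls S x) x (mem_cls S x)) :=
      hc.trans (upB_downB _ _ _).symm
    exact (hF ⟨cls S x, cls_mem_classes S x⟩).2.1 _ (upB_inj _ h2)
  · -- cross free
    intro a b hab h2 h3
    by_cases hr : S.r a b
    · -- same class
      have hBa : a ∈ cls S b := hr
      have hfa : glueMap S F a = upB (cls S b)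
          (F ⟨cls S b, cls_mem_classes S b⟩ (downB (cls S b) a hBa)) :=
        glueMap_eq S F (cls_mem_classes S b) hBa
      have hfb : glueMap S F b = upB (cls S b)
          (F ⟨cls S b, cls_mem_classes S b⟩ (downB (cls S b) b (mem_cls S b))) := rfl
      set B := cls S b
      set i := downB B a hBa
      set j := downB B b (mem_cls S b)
      have hij : i < j := by
        rw [← upB_lt_iff B, upB_downB, upB_downB]
        exact hab
      have hj2 : j < F ⟨B, cls_mem_classes S b⟩ i := by
        rw [← upB_lt_iff B, upB_downB]
        rw [hfa] at h2
        exact h2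
      have hj3 : F ⟨B, cls_mem_classes S b⟩ i < F ⟨B, cls_mem_classes S b⟩ j := by
        rw [← upB_lt_iff B]
        rw [hfa, hfb] at h3
        exact h3
      exact (hF ⟨B, cls_mem_classes S b⟩).2.2 i j hij hj2 hj3
    · -- distinct classes: contradiction with IsNC S
      apply hr
      exact hS a b (glueMap S F a) (glueMap S F b) hab h2 h3
        (S.iseqv.symm (glueMap_rel S F a)) (S.iseqv.symm (glueMap_rel S F b))

lemma join_glueP (q : PiT S) : joinSetoid (glueP S q).1 (glueP S q).2 = S := by
  apply Setoid.ext
  intro x y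
  constructor
  · intro h
    refine eqvGen_to_setoid S (fun a b hab => ?_) h
    rcases hab with hab | hab
    · subst hab
      exact S.iseqv.symm (glueMap_rel S (fun B => (q B).1.1) a)
    · subst hab
      exact S.iseqv.symm (glueMap_rel S (fun B => (q B).1.2) a)
  · intro h
    have hx : x ∈ cls S y := h
    have hy : y ∈ cls S y := mem_cls S y
    set B : S.classes := ⟨cls S y, cls_mem_classes S y⟩
    have htop := (q B).2.2.2
    have hrel : (joinSetoid (q B).1.1 (q B).1.2).r (downB B.1 x hx) (downB B.1 y hy) := by
      rw [htop]
      exact setoid_top_r _ _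
    have := join_up_generic (upB B.1)
      (fun i => glueMap_upB S (fun B => (q B).1.1) B i)
      (fun i => glueMap_upB S (fun B => (q B).1.2) B i) hrel
    rw [upB_downB, upB_downB] at this
    exact this

/-- closure of classes under the involutions -/
lemma class_closed {f g : Fin M → Fin M} (hq : joinSetoid f g = S)
    {B : Set (Fin M)} (hB : B ∈ S.classes) : ∀ x ∈ B, f x ∈ B := by
  intro x hx
  rw [eq_cls_of_mem hB hx]
  show S.r (f x) x
  rw [← hq]
  exact Relation.EqvGen.symm _ _ (Relation.EqvGen.rel _ _ (Or.inl rfl))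

lemma class_closed' {f g : Fin M → Fin M} (hq : joinSetoid f g = S)
    {B : Set (Fin M)} (hB : B ∈ S.classes) : ∀ x ∈ B, g x ∈ B := by
  intro x hx
  rw [eq_cls_of_mem hB hx]
  show S.r (g x) x
  rw [← hq]
  exact Relation.EqvGen.symm _ _ (Relation.EqvGen.rel _ _ (Or.inr rfl))

/-- restriction map from the fiber to the family of meanders on classes -/
noncomputable def restP (q : FibT S) : PiT S := fun B =>
  ⟨(resF B.1 q.1.1 (class_closed S q.2.2.2 B.2),
    resF B.1 q.1.2 (class_closed' S q.2.2.2 B.2)),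
    resF_isNCInv B.1 q.1.1 (class_closed S q.2.2.2 B.2) q.2.1,
    resF_isNCInv B.1 q.1.2 (class_closed' S q.2.2.2 B.2) q.2.2.1, by
      apply Setoid.ext
      intro i j
      constructor
      · intro _
        exact setoid_top_r i j
      · intro _
        have hx : upB B.1 i ∈ B.1 := upB_mem _ _
        have hy : upB B.1 j ∈ B.1 := upB_mem _ _
        have hrel : S.r (upB B.1 i) (upB B.1 j) := rel_of_mem_class B.2 hx hy
        have hrel2 : (joinSetoid q.1.1 q.1.2).r (upB B.1 i) (upB B.1 j) := by
          rw [q.2.2.2]; exact hrel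
        have := join_restrict q.2.1.1 q.2.2.1.1 (class_closed S q.2.2.2 B.2)
          (class_closed' S q.2.2.2 B.2) hrel2 hx hy
        rwa [downB_upB, downB_upB] at this⟩

lemma restP_fst (q : FibT S) (B : S.classes) :
    ((restP S q) B).1.1 = resF B.1 q.1.1 (class_closed S q.2.2.2 B.2) := rfl

lemma restP_snd (q : FibT S) (B : S.classes) :
    ((restP S q) B).1.2 = resF B.1 q.1.2 (class_closed' S q.2.2.2 B.2) := rfl

lemma glueP_fst (q : PiT S) : (glueP S q).1 = glueMap S (fun B => (q B).1.1) := rfl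
lemma glueP_snd (q : PiT S) : (glueP S q).2 = glueMap S (fun B => (q B).1.2) := rfl

noncomputable def fibEquiv (hS : IsNC S) : FibT S ≃ PiT S where
  toFun := restP S
  invFun q := ⟨glueP S q,
    glueMap_isNCInv S hS (fun B => (q B).1.1) (fun B => (q B).2.1),
    glueMap_isNCInv S hS (fun B => (q B).1.2) (fun B => (q B).2.2.1),
    join_glueP S q⟩
  left_inv q := by
    apply Subtype.ext
    apply Prod.ext
    · funext x
      show (glueP S (restP S q)).1 x = q.1.1 x
      rw [glueP_fst, glueMap_eq S _ (cls_mem_classes S x) (mem_cls S x)]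
      show upB (cls S x) ((restP S q ⟨cls S x, cls_mem_classes S x⟩).1.1
        (downB (cls S x) x (mem_cls S x))) = q.1.1 x
      rw [restP_fst, upB_resF, upB_downB]
    · funext x
      show (glueP S (restP S q)).2 x = q.1.2 x
      rw [glueP_snd, glueMap_eq S _ (cls_mem_classes S x) (mem_cls S x)]
      show upB (cls S x) ((restP S q ⟨cls S x, cls_mem_classes S x⟩).1.2
        (downB (cls S x) x (mem_cls S x))) = q.1.2 x
      rw [restP_snd, upB_resF, upB_downB]
  right_inv q := by
    funext B
    apply Subtype.ext
    apply Prod.ext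
    · funext i
      show resF B.1 (glueP S q).1 (class_closed S (join_glueP S q) B.2) i = (q B).1.1 i
      apply upB_inj B.1
      rw [upB_resF]
      show (glueP S q).1 (upB B.1 i) = upB B.1 ((q B).1.1 i)
      rw [glueP_fst, glueMap_upB S (fun B => (q B).1.1) B i]
    · funext i
      show resF B.1 (glueP S q).2 (class_closed' S (join_glueP S q) B.2) i = (q B).1.2 i
      apply upB_inj B.1
      rw [upB_resF]
      show (glueP S q).2 (upB B.1 i) = upB B.1 ((q B).1.2 i)
      rw [glueP_snd, glueMap_upB S (fun B => (q B).1.2) B i]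

end Glue
section Counting

variable {M : ℕ}

/-- classes are nonempty -/
lemma class_ncard_pos {S : Setoid (Fin M)} {B : Set (Fin M)} (hB : B ∈ S.classes) :
    0 < B.ncard := by
  obtain ⟨y, rfl⟩ := hB
  rw [Set.ncard_pos (Set.toFinite _)]
  exact ⟨y, S.iseqv.refl y⟩

/-- if all classes are even, the total size is even -/
lemma even_of_all_classes_even {S : Setoid (Fin M)}
    (h : ∀ B ∈ S.classes, Even (Set.ncard B)) : Even M := by
  classical
  set C : Finset (Set (Fin M)) := (S.classes.toFinite).toFinset with hC
  have hcov : (Finset.univ : Finset (Fin M)) = C.biUnion (fun B => B.toFinite.toFinset) := by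
    ext x
    simp only [Finset.mem_univ, true_iff, Finset.mem_biUnion]
    refine ⟨cls S x, ?_, ?_⟩
    · rw [Set.Finite.mem_toFinset]
      exact cls_mem_classes S x
    · rw [Set.Finite.mem_toFinset]
      exact mem_cls S x
  have hdisj : ∀ B1 ∈ C, ∀ B2 ∈ C, B1 ≠ B2 →
      Disjoint (B1.toFinite.toFinset) (B2.toFinite.toFinset) := by
    intro B1 h1 B2 h2 hne
    rw [hC, Set.Finite.mem_toFinset] at h1 h2
    rw [Finset.disjoint_left]
    intro x hx1 hx2
    rw [Set.Finite.mem_toFinset] at hx1 hx2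
    exact hne ((eq_cls_of_mem h1 hx1).trans (eq_cls_of_mem h2 hx2).symm)
  have hM : M = ∑ B ∈ C, (B.toFinite.toFinset).card := by
    rw [← Finset.card_biUnion hdisj, ← hcov, Finset.card_univ, Fintype.card_fin]
  rw [hM, even_iff_two_dvd]
  apply Finset.dvd_sum
  intro B hBC
  rw [← even_iff_two_dvd]
  have hBcl : B ∈ S.classes := by rwa [hC, Set.Finite.mem_toFinset] at hBC
  have := h B hBcl
  rwa [Set.ncard_eq_toFinset_card B B.toFinite] at this

/-- sigma cardinality over a fintype index -/
lemma nat_card_sigma {ι : Type*} [Fintype ι] (β : ι → Type*) [∀ i, Finite (β i)] :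
    Nat.card ((i : ι) × β i) = ∑ i : ι, Nat.card (β i) := by
  letI : ∀ i, Fintype (β i) := fun i => Fintype.ofFinite _
  rw [Nat.card_eq_fintype_card, Fintype.card_sigma]
  exact Finset.sum_congr rfl (fun i _ => (Nat.card_eq_fintype_card).symm)

/-- the inner fiber equivalence -/
noncomputable def fibEquiv3 (S : {S : Setoid (Fin M) // IsNC S}) :
    {q : InvPairNC M // (⟨joinSetoid q.1.1 q.1.2, q.2.2.2⟩ :
      {S : Setoid (Fin M) // IsNC S}) = S} ≃ FibT S.1 where
  toFun p := ⟨p.1.1, p.1.2.1, p.1.2.2.1, congrArg Subtype.val p.2⟩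
  invFun q := ⟨⟨q.1, q.2.1, q.2.2.1, by rw [q.2.2.2]; exact S.2⟩, Subtype.ext q.2.2.2⟩
  left_inv p := by
    apply Subtype.ext
    apply Subtype.ext
    rfl
  right_inv q := by
    apply Subtype.ext
    rfl

lemma card_invPairNC (M : ℕ) :
    Nat.card (InvPairNC M) =
      ∑ᶠ S ∈ {S : Setoid (Fin M) | IsNC S},
        ∏ᶠ B ∈ Setoid.classes S, Nat.card (InvPairTop (Set.ncard B)) := by
  classical
  letI : Fintype ↥{S : Setoid (Fin M) | IsNC S} := Fintype.ofFinite _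
  let J : InvPairNC M → ↥{S : Setoid (Fin M) | IsNC S} :=
    fun q => ⟨joinSetoid q.1.1 q.1.2, q.2.2.2⟩
  have e0 : Nat.card (InvPairNC M) = Nat.card ((S : ↥{S : Setoid (Fin M) | IsNC S}) ×
      {q : InvPairNC M // J q = S}) := (Nat.card_congr (Equiv.sigmaFiberEquiv J)).symm
  rw [e0, nat_card_sigma]
  have e2 : ∀ S : ↥{S : Setoid (Fin M) | IsNC S}, Nat.card {q : InvPairNC M // J q = S} =
      ∏ᶠ B ∈ Setoid.classes S.1, Nat.card (InvPairTop (Set.ncard B)) := by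
    intro S
    rw [Nat.card_congr (fibEquiv3 S), Nat.card_congr (fibEquiv S.1 S.2)]
    letI : Fintype ↥(Setoid.classes S.1) := Fintype.ofFinite _
    rw [show Nat.card (PiT S.1) =
      Nat.card (∀ B : ↥(Setoid.classes S.1), InvPairTop ((B : Set (Fin M)).ncard)) from rfl]
    rw [Nat.card_pi]
    rw [← finprod_set_coe_eq_finprod_mem (Setoid.classes S.1)
      (f := fun B => Nat.card (InvPairTop (Set.ncard B))), finprod_eq_prod_of_fintype]
  rw [← finsum_set_coe_eq_finsum_mem {S : Setoid (Fin M) | IsNC S}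
      (f := fun S => ∏ᶠ B ∈ Setoid.classes S, Nat.card (InvPairTop (Set.ncard B))),
    finsum_eq_sum_of_fintype]
  exact Finset.sum_congr rfl (fun S _ => e2 S)

end Counting
open Polynomial in
/-- Let `ν` be the unital linear functional on `ℂ[X]` whose free cumulants are
`κ_{2n-1} = 0` and `κ_{2n} = m^{(1)}_n` (the meander numbers).  Then the odd
moments of `ν` vanish and `ν(X^{2n})` counts the pairs `(π,ρ) ∈ NC(n)²` whose
meandric system `M_{π,ρ}` is strictly non-crossing, i.e. whose orbit partition
is a non-crossing partition of `{1,…,2n}`. -/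
theorem moments_of_meander_cumulant_functional
    (ν : Polynomial ℂ →ₗ[ℂ] ℂ) (hν : ν 1 = 1) (κ : ℕ → ℂ)
    (h : MomCum (fun n => ν (X ^ n)) κ)
    (hodd : ∀ n : ℕ, 0 < n → κ (2*n - 1) = 0)
    (heven : ∀ n : ℕ, 0 < n → κ (2*n) = (meanderNum n : ℂ)) :
    ∀ n : ℕ, 0 < n →
      ν (X ^ (2*n - 1)) = 0 ∧
      ν (X ^ (2*n)) =
        (Nat.card {pr : Setoid (Fin n) × Setoid (Fin n) //
          IsNC pr.1 ∧ IsNC pr.2 ∧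
          IsNC (orbitSetoid (meanderMap pr.1 pr.2))} : ℂ) := by
  classical
  have kappa_odd : ∀ m : ℕ, ¬ Even m → κ m = 0 := by
    intro m hm
    rw [Nat.not_even_iff] at hm
    have h1 : 0 < (m+1)/2 := by omega
    have h2 : 2*((m+1)/2) - 1 = m := by omega
    have := hodd ((m+1)/2) h1
    rwa [h2] at this
  have kappa_card : ∀ m : ℕ, 0 < m → κ m = (Nat.card (InvPairTop m) : ℂ) := by
    intro m hm
    by_cases he : Even m
    · obtain ⟨k, hk⟩ := he
      have hk' : m = 2*k := by omega
      have hkpos : 0 < k := by omega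
      rw [hk', heven k hkpos, meanderNum_eq_card k hkpos]
    · rw [kappa_odd m he]
      have : Nat.card (InvPairTop m) = 0 := @Nat.card_of_isEmpty _ (invPairTop_empty_of_odd he)
      rw [this, Nat.cast_zero]
  intro n hn
  constructor
  · -- odd moments vanish
    have hm' : ν (X ^ (2*n - 1)) =
        ∑ᶠ S ∈ {S : Setoid (Fin (2*n-1)) | IsNC S}, ∏ᶠ B ∈ Setoid.classes S, κ B.ncard :=
      h (2*n-1) (by omega)
    rw [hm']
    have hfin : ({S : Setoid (Fin (2*n-1)) | IsNC S}).Finite := Set.toFinite _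
    rw [← Set.Finite.coe_toFinset hfin, finsum_mem_coe_finset]
    apply Finset.sum_eq_zero
    intro S hS
    obtain ⟨B0, hB0, hoddB⟩ : ∃ B0 ∈ S.classes, ¬ Even (B0.ncard) := by
      by_contra hc
      push_neg at hc
      have := even_of_all_classes_even hc
      rw [Nat.even_iff] at this
      omega
    rw [← Set.Finite.coe_toFinset (S.classes.toFinite), finprod_mem_coe_finset]
    exact Finset.prod_eq_zero ((S.classes.toFinite.mem_toFinset).mpr hB0) (kappa_odd _ hoddB)
  · -- even moments
    have hm' : ν (X ^ (2*n)) =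
        ∑ᶠ S ∈ {S : Setoid (Fin (2*n)) | IsNC S}, ∏ᶠ B ∈ Setoid.classes S, κ B.ncard :=
      h (2*n) (by omega)
    rw [hm']
    have hfin : ({S : Setoid (Fin (2*n)) | IsNC S}).Finite := Set.toFinite _
    have hcard : (Nat.card {pr : Setoid (Fin n) × Setoid (Fin n) //
          IsNC pr.1 ∧ IsNC pr.2 ∧ IsNC (orbitSetoid (meanderMap pr.1 pr.2))}) =
        ∑ S ∈ hfin.toFinset, ∏ᶠ B ∈ Setoid.classes S, Nat.card (InvPairTop (Set.ncard B)) := by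
      rw [Nat.card_congr (equivNC n), card_invPairNC (2*n)]
      conv_lhs => rw [← Set.Finite.coe_toFinset hfin]
      rw [finsum_mem_coe_finset]
    have hLHS : (∑ᶠ S ∈ {S : Setoid (Fin (2*n)) | IsNC S}, ∏ᶠ B ∈ Setoid.classes S, κ B.ncard)
        = ∑ S ∈ hfin.toFinset, ∏ᶠ B ∈ Setoid.classes S, κ B.ncard := by
      conv_lhs => rw [← Set.Finite.coe_toFinset hfin]
      rw [finsum_mem_coe_finset]
    rw [hLHS, hcard, Nat.cast_sum]
    apply Finset.sum_congr rfl
    intro S hS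
    rw [Set.Finite.mem_toFinset] at hS
    rw [← Set.Finite.coe_toFinset (S.classes.toFinite), finprod_mem_coe_finset,
      finprod_mem_coe_finset, Nat.cast_prod]
    apply Finset.prod_congr rfl
    intro B hB
    rw [Set.Finite.mem_toFinset] at hB
    exact kappa_card _ (class_ncard_pos hB)
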